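/- Given a k-subset-sum instance (M = {m_1,…,m_n}, T, k) with m* = max M and u as above, construct arguments a_0,…,a_n with w(a_i) = S(a_i) = u·m_i/m* for i ≥ 1, w(a_0) = 1, and S(a_0) = 1/(1 + k + T·u/(k·m*)). If M' ⊆ M with |M'| = k and Σ_{m ∈ M'} m = T, then D = {(a_i, a_0) : m_i ∈ M'} realizes S under the weighted cardinality-based semantics: S(a_0) = w(a_0)/(1 + k + (Σ_{b attacks a_0} S(b))/k), and each a_i (i ≥ 1) being unattacked has degree w(a_i). -/

import Mathlib

/-- Attackers of `a` with strictly positive initial weight. -/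
noncomputable def attStar {A : Type*} [Fintype A] [DecidableEq A]
    (D : Finset (A × A)) (w : A → ℝ) (a : A) : Finset A :=
  Finset.univ.filter (fun b => (b, a) ∈ D ∧ 0 < w b)

/-- `D` realizes `S` under the weighted cardinality-based semantics. -/
noncomputable def cbRealizes {A : Type*} [Fintype A] [DecidableEq A]
    (D : Finset (A × A)) (w S : A → ℝ) : Prop :=
  ∀ a, if (attStar D w a).card = 0 then S a = w a
    else S a = w a / (1 + (attStar D w a).card +
      (∑ b ∈ attStar D w a, S b) / (attStar D w a).card)

/-- Forward direction of the k-subset-sum reduction for the weighted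
cardinality-based semantics: a k-subset-sum solution `M'` (of size `k`,
summing to `T`) yields an attack set realizing the constructed degrees.
Here `m* = max M`, `u = (√(k² + 2k + 4/k + 1) − k − 1)/3`, `a₀` is `none`
and `aᵢ` is `some i`. -/
theorem cb_kssp_forward (n : ℕ) (hn : 0 < n) (m : Fin n → ℝ) (hm : ∀ i, 0 < m i)
    (mstar : ℝ) (hub : ∀ i, m i ≤ mstar) (hmem : ∃ i, m i = mstar)
    (T : ℝ) (hT : 0 < T)
    (M' : Finset (Fin n)) (hk : 1 ≤ M'.card) (hsum : ∑ i ∈ M', m i = T) :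
    let k : ℝ := M'.card
    let u : ℝ := (Real.sqrt (k^2 + 2 * k + 4 / k + 1) - k - 1) / 3
    let w : Option (Fin n) → ℝ := fun x => x.elim 1 (fun i => u * m i / mstar)
    let S : Option (Fin n) → ℝ :=
      fun x => x.elim (1 / (1 + k + T * u / (k * mstar))) (fun i => u * m i / mstar)
    let D : Finset (Option (Fin n) × Option (Fin n)) :=
      M'.image (fun i => (some i, none))
    cbRealizes D w S := by
  intro k u w S D
  obtain ⟨i0, hi0⟩ := hmem
  have hmstar : 0 < mstar := hi0 ▸ hm i0
  have hk1 : (1:ℝ) ≤ k := by simpa [k] using (Nat.one_le_cast (α := ℝ)).mpr hk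
  have hk0 : (0:ℝ) < k := lt_of_lt_of_le one_pos hk1
  have hu : 0 < u := by
    have h1 : (k + 1) < Real.sqrt (k^2 + 2 * k + 4 / k + 1) := by
      rw [show k^2 + 2*k + 4/k + 1 = (k+1)^2 + 4/k by ring]
      have h4 : 0 < 4 / k := by positivity
      nlinarith [Real.sq_sqrt (by positivity : (0:ℝ) ≤ (k+1)^2 + 4/k),
        Real.sqrt_nonneg ((k+1)^2 + 4/k)]
    have : 0 < Real.sqrt (k^2 + 2 * k + 4 / k + 1) - k - 1 := by linarith
    positivity
  intro a
  match a with
  | some i =>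
    have hcard : (attStar D w (some i)).card = 0 := by
      rw [Finset.card_eq_zero]
      ext b
      simp only [attStar, Finset.mem_filter, Finset.mem_univ, true_and,
        Finset.notMem_empty, iff_false, D, Finset.mem_image]
      rintro ⟨⟨j, _, hj⟩, _⟩
      exact absurd (congrArg Prod.snd hj) (by simp)
    rw [if_pos hcard]; rfl
  | none =>
    have hset : attStar D w none = M'.image some := by
      ext b
      simp only [attStar, Finset.mem_filter, Finset.mem_univ, true_and,
        D, Finset.mem_image, Prod.mk.injEq]
      constructor
      · rintro ⟨⟨j, hj, hjb, -⟩, -⟩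
        exact ⟨j, hj, hjb⟩
      · rintro ⟨j, hj, hjb⟩
        refine ⟨⟨j, hj, hjb, trivial⟩, ?_⟩
        subst hjb
        show (0:ℝ) < u * m j / mstar
        exact div_pos (mul_pos hu (hm j)) hmstar
    have hcard : (attStar D w none).card = M'.card := by
      rw [hset, Finset.card_image_of_injective _ (Option.some_injective _)]
    have hcardne : (attStar D w none).card ≠ 0 := by
      rw [hcard]; omega
    have hsumS : ∑ b ∈ attStar D w none, S b = u * T / mstar := by
      rw [hset, Finset.sum_image (fun a _ b _ h => Option.some_injective _ h)]
      have : ∀ j ∈ M', S (some j) = u * m j / mstar := fun j _ => rfl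
      rw [Finset.sum_congr rfl this, ← hsum]
      rw [← Finset.sum_div, ← Finset.mul_sum]
    rw [if_neg hcardne]
    show (1 / (1 + k + T * u / (k * mstar)) : ℝ) = _
    rw [hsumS, hcard]
    have hw : w none = 1 := rfl
    rw [hw]
    have : ((M'.card : ℕ) : ℝ) = k := rfl
    rw [this]
    congr 1
    field_simp
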